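/- For every real x that is not an integer and every natural number k, the k-th derivative of the function t ↦ ∑_{n=-∞}^{∞} (-1)^n/(t+n) at t = x equals (−1)^k · k! · ∑_{n=-∞}^{∞} (-1)^n/(x+n)^{k+1}; equivalently, the k-th derivative of t ↦ π/sin(πt) at x equals (−1)^k k! ∑_{n∈ℤ} (−1)^n/(x+n)^{k+1}. -/

import Mathlib

open Real Filter Finset Topology
set_option maxHeartbeats 1000000

lemma sum_Icc_eq (c : ℤ → ℝ) (n : ℕ) :
    ∑ m ∈ Icc (-(n:ℤ)) n, c m = c 0 + ∑ j ∈ range n, (c (j+1) + c (-(j+1))) := by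
  induction n with
  | zero => simp
  | succ n ih =>
    have h : Icc (-(n+1:ℕ):ℤ) ((n+1:ℕ):ℤ) =
        insert (-(n+1:ℕ):ℤ) (insert ((n+1:ℕ):ℤ) (Icc (-(n:ℕ):ℤ) (n:ℕ))) := by
      ext m; simp only [Finset.mem_Icc, Finset.mem_insert]; omega
    rw [h, Finset.sum_insert (by simp only [Finset.mem_Icc, Finset.mem_insert]; omega),
      Finset.sum_insert (by simp only [Finset.mem_Icc]; omega), ih, Finset.sum_range_succ]
    push_cast
    ring

lemma exists_delta (x : ℝ) (hx : ∀ m : ℤ, x ≠ m) :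
    ∃ δ > 0, ∀ t ∈ Metric.closedBall x δ, ∀ m : ℤ, t ≠ (m:ℝ) := by
  set d : ℝ := min (x - ⌊x⌋) (⌊x⌋ + 1 - x) with hd
  have h1 : 0 < x - ⌊x⌋ := sub_pos.2 (lt_of_le_of_ne (Int.floor_le x) (Ne.symm (hx _)))
  have h2 : 0 < (⌊x⌋:ℝ) + 1 - x := sub_pos.2 (Int.lt_floor_add_one x)
  have hdpos : 0 < d := lt_min h1 h2
  refine ⟨d/2, by positivity, fun t ht m hm => ?_⟩
  rw [Metric.mem_closedBall, Real.dist_eq] at ht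
  subst hm
  have habs := abs_le.1 ht
  have hxm : d ≤ |x - m| := by
    rcases le_or_gt (m:ℝ) (⌊x⌋:ℝ) with h | h
    · have := min_le_left (x - ⌊x⌋:ℝ) (⌊x⌋ + 1 - x)
      rw [abs_of_pos (by linarith)]; linarith
    · have hm1 : (⌊x⌋:ℝ) + 1 ≤ m := by
        have : ⌊x⌋ < m := by exact_mod_cast h
        exact_mod_cast this
      have := min_le_right (x - ⌊x⌋:ℝ) (⌊x⌋ + 1 - x)
      rw [abs_of_neg (by linarith)]; linarith
  rcases abs_le.1 (le_refl |x - (m:ℝ)|) with _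
  rcases le_abs.1 hxm with h | h
  · linarith
  · linarith

lemma TUO_comp {α β ι κ : Type*} [UniformSpace β] {F : ι → α → β} {g : α → β}
    {p : Filter ι} {q : Filter κ} {φ : κ → ι} {s : Set α}
    (h : TendstoUniformlyOn F g p s) (hφ : Tendsto φ q p) :
    TendstoUniformlyOn (fun n => F (φ n)) g q s :=
  fun u hu => hφ.eventually (h u hu)

lemma tendsto_Icc_atTop : Tendsto (fun N : ℕ => Finset.Icc (-(N:ℤ)) N) atTop atTop := by
  apply tendsto_atTop_finset_of_monotone
  · intro a b hab
    apply Finset.Icc_subset_Icc <;> omega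
  · intro m
    exact ⟨m.natAbs, by rw [Finset.mem_Icc]; omega⟩

lemma summable_aux : Summable (fun m : ℤ => 4 / (m:ℝ)^2) := by
  have := (summable_one_div_int_pow (p := 2)).2 (by norm_num)
  simpa [div_eq_mul_inv] using this.mul_left 4

lemma term_bound {x δ : ℝ} (hδ : 0 < δ) {t : ℝ} (ht : t ∈ Metric.closedBall x δ)
    {m : ℤ} (hm : 2*(|x|+δ)+2 ≤ |(m:ℝ)|) {k : ℕ} (hk : 2 ≤ k) :
    ‖(-1:ℝ)^m / (t+m)^k‖ ≤ 4 / (m:ℝ)^2 := by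
  rw [Metric.mem_closedBall, Real.dist_eq] at ht
  set a := |(m:ℝ)| with ha
  have hA : 0 ≤ |x| + δ := by positivity
  have ha2 : 2 ≤ a := by linarith
  have htabs : |t| ≤ |x| + δ := by
    have := abs_le.1 ht; rcases abs_le.1 (le_refl |x|) with _; 
    have h1 : t = (t - x) + x := by ring
    calc |t| = |(t-x) + x| := by rw [← h1]
      _ ≤ |t-x| + |x| := abs_add_le _ _
      _ ≤ |x| + δ := by linarith
  have htm : a/2 ≤ |t + m| := by
    have h1 : a - |t| ≤ |t + m| := by
      have h0 : |(m:ℝ)| ≤ |t+m| + |t| := by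
        have h0 := abs_sub (t + (m:ℝ)) t
        simpa using h0
      rw [← ha] at h0; linarith
    have : |t| ≤ (a - 2)/2 := by linarith
    linarith
  have hone : |(-1:ℝ)^m| = 1 := by
    rcases Int.even_or_odd m with h | h
    · simp [h.neg_one_zpow]
    · simp [h.neg_one_zpow]
  have hnorm : ‖(-1:ℝ)^m / (t+m)^k‖ = 1 / |t+m|^k := by
    rw [Real.norm_eq_abs, abs_div, hone, abs_pow]
  rw [hnorm]
  have hpos : (0:ℝ) < a/2 := by linarith
  have h2 : (a/2)^2 ≤ (a/2)^k := pow_le_pow_right₀ (by linarith) hk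
  have h3 : (a/2)^k ≤ |t+m|^k := pow_le_pow_left₀ hpos.le htm k
  have h4 : (0:ℝ) < (a/2)^2 := by positivity
  calc 1 / |t+m|^k ≤ 1 / (a/2)^2 := by
        apply one_div_le_one_div_of_le h4 (le_trans h2 h3)
    _ = 4 / (m:ℝ)^2 := by
        rw [div_pow]; rw [ha, sq_abs]; ring

lemma unif_sum (x δ : ℝ) (hδ : 0 < δ) (k : ℕ) (hk : 2 ≤ k) :
    TendstoUniformlyOn
      (fun (N:ℕ) (t:ℝ) => ∑ m ∈ Icc (-(N:ℤ)) N, (-1:ℝ)^m / (t+m)^k)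
      (fun t => ∑' m : ℤ, (-1:ℝ)^m / (t+m)^k) atTop (Metric.closedBall x δ) := by
  have main : TendstoUniformlyOn
      (fun (s : Finset ℤ) (t:ℝ) => ∑ m ∈ s, (-1:ℝ)^m / (t+m)^k)
      (fun t => ∑' m : ℤ, (-1:ℝ)^m / (t+m)^k) atTop (Metric.closedBall x δ) := by
    apply tendstoUniformlyOn_tsum_of_cofinite_eventually summable_aux
    have hcof : {m : ℤ | ¬ (2*(|x|+δ)+2 ≤ |(m:ℝ)|)}.Finite := by
      apply Set.Finite.subset (Set.finite_Icc (-(⌈2*(|x|+δ)+2⌉:ℤ)) ⌈2*(|x|+δ)+2⌉)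
      intro m hm
      simp only [Set.mem_setOf_eq, not_le] at hm
      have h1 : |(m:ℝ)| ≤ (⌈2*(|x|+δ)+2⌉:ℤ) := le_trans hm.le (Int.le_ceil _)
      rw [← Int.cast_abs] at h1
      have h2 : |m| ≤ ⌈2*(|x|+δ)+2⌉ := by exact_mod_cast h1
      simp only [Set.mem_Icc]
      rw [abs_le] at h2
      omega
    apply Filter.eventually_cofinite.2 (Set.Finite.subset hcof ?_)
    intro m hm
    simp only [Set.mem_setOf_eq] at hm ⊢
    intro hle
    exact hm (fun t ht => term_bound hδ ht hle hk)
  exact TUO_comp main tendsto_Icc_atTop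

lemma add_int_ne_zero {t : ℝ} (ht : ∀ m : ℤ, t ≠ m) (m : ℤ) : t + m ≠ 0 := by
  intro h
  exact ht (-m) (by push_cast; linarith)

lemma hasDerivAt_term (m : ℤ) (k : ℕ) {t : ℝ} (ht : t + m ≠ 0) :
    HasDerivAt (fun t : ℝ => (-1:ℝ)^m / (t+m)^(k+1))
      (-((k:ℝ)+1) * ((-1:ℝ)^m / (t+m)^(k+2))) t := by
  have h1 : HasDerivAt (fun t : ℝ => t + (m:ℝ)) 1 t := (hasDerivAt_id t).add_const _
  have h2 := h1.pow (k+1)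
  have h3 := (h2.inv (pow_ne_zero _ ht)).const_mul ((-1:ℝ)^m)
  have he : ∀ s : ℝ, (-1:ℝ)^m / (s+m)^(k+1) = (-1:ℝ)^m * ((s+m)^(k+1))⁻¹ := fun s => by
    rw [div_eq_mul_inv]
  rw [show (fun t : ℝ => (-1:ℝ)^m / (t+m)^(k+1)) = fun t : ℝ => (-1:ℝ)^m * ((t+m)^(k+1))⁻¹
    from funext he]
  refine h3.congr_deriv ?_
  have hp : ((t+m)^(k+1))^2 ≠ 0 := pow_ne_zero _ (pow_ne_zero _ ht)
  simp only [Pi.pow_apply, Nat.add_sub_cancel, mul_one]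
  field_simp
  push_cast
  ring
lemma hasDerivAt_S (N k : ℕ) {t : ℝ} (ht : ∀ m : ℤ, t ≠ m) :
    HasDerivAt (fun t : ℝ => ∑ m ∈ Icc (-(N:ℤ)) N, (-1:ℝ)^m/(t+m)^(k+1))
      (-((k:ℝ)+1) * ∑ m ∈ Icc (-(N:ℤ)) N, (-1:ℝ)^m/(t+m)^(k+2)) t := by
  rw [Finset.mul_sum]
  exact HasDerivAt.fun_sum fun m _ => hasDerivAt_term m k (add_int_ne_zero ht m)

lemma summable_shift (C : ℝ) : Summable (fun j : ℕ => C / ((j:ℝ)+1)^2) := by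
  have h0 : Summable (fun j : ℕ => 1 / (j:ℝ)^2) :=
    summable_one_div_nat_pow.2 (by norm_num)
  have h1 : Summable (fun j : ℕ => 1 / ((j+1:ℕ):ℝ)^2) := (summable_nat_add_iff 1).2 h0
  have h2 := h1.mul_left C
  apply h2.congr
  intro j
  push_cast
  rw [mul_one_div]

lemma cot_limit (x : ℝ) (hx : ∀ m : ℤ, x ≠ m) :
    Tendsto (fun n : ℕ => ∑ m ∈ Icc (-(n:ℤ)) n, 1/(x+m)) atTop
      (𝓝 (π * Real.cos (π*x) / Real.sin (π*x))) := by
  obtain ⟨δ, hδ, hball⟩ := exists_delta x hx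
  set A : ℝ := |x| + δ with hA
  have hApos : 0 < A := by positivity
  -- the summand pairs
  set v : ℕ → ℝ → ℝ := fun j t => 1/(t+(j+1)) + 1/(t-(j+1)) with hv
  -- basic nonvanishing facts on the ball
  have hne : ∀ t ∈ Metric.closedBall x δ, (t ≠ 0 ∧ ∀ j : ℕ, t + (j+1) ≠ 0 ∧ t - (j+1) ≠ 0) := by
    intro t ht
    refine ⟨fun h => hball t ht 0 (by simpa using h), fun j => ⟨?_, ?_⟩⟩
    · intro h; exact hball t ht (-(j+1)) (by push_cast; linarith)
    · intro h; exact hball t ht (j+1) (by push_cast; linarith)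
  have habs : ∀ t ∈ Metric.closedBall x δ, |t| ≤ A := by
    intro t ht
    rw [Metric.mem_closedBall, Real.dist_eq] at ht
    have h1 := abs_le.1 ht
    rcases abs_le.1 (le_refl |x|) with _
    have : |t| = |(t - x) + x| := by ring_nf
    rw [this]
    calc |(t-x)+x| ≤ |t-x| + |x| := abs_add_le _ _
      _ ≤ A := by rw [hA]; linarith
  -- uniform convergence of ∑ v j on the closed ball
  have hunif : TendstoUniformlyOn (fun (n:ℕ) t => ∑ j ∈ range n, v j t)
      (fun t => ∑' j : ℕ, v j t) atTop (Metric.closedBall x δ) := by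
    have main : TendstoUniformlyOn (fun (s : Finset ℕ) t => ∑ j ∈ s, v j t)
        (fun t => ∑' j : ℕ, v j t) atTop (Metric.closedBall x δ) := by
      apply tendstoUniformlyOn_tsum_of_cofinite_eventually (summable_shift (8*A))
      have hcof : {j : ℕ | ¬ (2*A + 2 ≤ (j:ℝ)+1)}.Finite := by
        apply Set.Finite.subset (Set.finite_Icc 0 ⌈2*A+2⌉₊)
        intro j hj
        simp only [Set.mem_setOf_eq, not_le] at hj
        simp only [Set.mem_Icc]
        constructor
        · exact Nat.zero_le _
        · have : (j:ℝ) ≤ 2*A+2 := by linarith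
          calc j ≤ ⌈(j:ℝ)⌉₊ := by simp [Nat.ceil_natCast]
            _ ≤ ⌈2*A+2⌉₊ := Nat.ceil_le_ceil this
      apply Filter.eventually_cofinite.2 (Set.Finite.subset hcof ?_)
      intro j hj
      simp only [Set.mem_setOf_eq] at hj ⊢
      intro hle
      apply hj
      intro t ht
      have h1 := (hne t ht).2 j
      have h2 := habs t ht
      have hc : ((j:ℝ)+1)/2 ≤ |t + (j+1)| := by
        have h3 : (j:ℝ)+1 - |t| ≤ |t+(j+1)| := by
          have h0 : |((j:ℝ)+1)| ≤ |t+(j+1)| + |t| := by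
            have := abs_sub (t + ((j:ℝ)+1)) t
            simpa using this
          rw [abs_of_pos (by positivity)] at h0
          linarith
        have : |t| ≤ ((j:ℝ)+1)/2 := by linarith
        linarith
      have hc' : ((j:ℝ)+1)/2 ≤ |t - (j+1)| := by
        have h3 : (j:ℝ)+1 - |t| ≤ |t-(j+1)| := by
          have h0 : |((j:ℝ)+1)| ≤ |t-(j+1)| + |t| := by
            have h0' := abs_sub (t - ((j:ℝ)+1)) t
            rw [show t - ((j:ℝ)+1) - t = -((j:ℝ)+1) by ring, abs_neg] at h0'
            exact h0'
          rw [abs_of_pos (by positivity)] at h0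
          linarith
        have : |t| ≤ ((j:ℝ)+1)/2 := by linarith
        linarith
      have hpos : (0:ℝ) < ((j:ℝ)+1)/2 := by positivity
      obtain ⟨hp1, hq1⟩ := h1
      have hveq : v j t = 2*t/((t+((j:ℝ)+1))*(t-((j:ℝ)+1))) := by
        show 1/(t+((j:ℝ)+1)) + 1/(t-((j:ℝ)+1)) = _
        rw [div_add_div _ _ hp1 hq1]
        congr 1
        ring
      rw [Real.norm_eq_abs, hveq, abs_div, abs_mul (t+((j:ℝ)+1))]
      have hnum : |2*t| ≤ 2*A := by rw [abs_mul, abs_two]; linarith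
      have hden : ((j:ℝ)+1)^2/4 ≤ |t+((j:ℝ)+1)| * |t-((j:ℝ)+1)| := by
        have := mul_le_mul hc hc' hpos.le (abs_nonneg _)
        nlinarith
      calc |2*t| / (|t+((j:ℝ)+1)| * |t-((j:ℝ)+1)|)
          ≤ (2*A) / (((j:ℝ)+1)^2/4) :=
            div_le_div₀ (by positivity) hnum (by positivity) hden
        _ = 8*A/((j:ℝ)+1)^2 := by
            rw [div_div_eq_mul_div]
            ring
    exact TUO_comp main tendsto_finset_range
  -- the sequence of log-functions and its derivatives
  set G : ℕ → ℝ → ℝ := fun n t =>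
    Real.log π + Real.log t + ∑ j ∈ range n, Real.log (1 - t^2/((j:ℝ)+1)^2) with hG
  set D : ℝ → ℝ := fun t => 1/t + ∑' j : ℕ, v j t with hD
  have hfac_ne : ∀ t ∈ Metric.closedBall x δ, ∀ j : ℕ, 1 - t^2/((j:ℝ)+1)^2 ≠ 0 := by
    intro t ht j
    obtain ⟨ht0, htj⟩ := hne t ht
    obtain ⟨hp, hq⟩ := htj j
    have hc : ((j:ℝ)+1) ≠ 0 := by positivity
    have heq : 1 - t^2/((j:ℝ)+1)^2 = -((t+((j:ℝ)+1))*(t-((j:ℝ)+1)))/((j:ℝ)+1)^2 := by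
      field_simp
      ring
    rw [heq]
    apply div_ne_zero _ (by positivity)
    exact neg_ne_zero.2 (mul_ne_zero hp hq)
  have hGderiv : ∀ n : ℕ, ∀ t ∈ Metric.ball x δ,
      HasDerivAt (G n) (1/t + ∑ j ∈ range n, v j t) t := by
    intro n t ht
    have ht' : t ∈ Metric.closedBall x δ := Metric.ball_subset_closedBall ht
    obtain ⟨ht0, htj⟩ := hne t ht'
    have hlogt : HasDerivAt (fun t : ℝ => Real.log π + Real.log t) (1/t) t := by
      simpa [one_div] using (Real.hasDerivAt_log ht0).const_add (Real.log π)
    refine HasDerivAt.add hlogt (HasDerivAt.fun_sum fun j _ => ?_)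
    obtain ⟨hp, hq⟩ := htj j
    have hc : ((j:ℝ)+1) ≠ 0 := by positivity
    have hsq : HasDerivAt (fun t : ℝ => t^2) (2*t) t := by
      simpa using hasDerivAt_pow 2 t
    have hu : HasDerivAt (fun t : ℝ => 1 - t^2/((j:ℝ)+1)^2) (-(2*t/((j:ℝ)+1)^2)) t := by
      simpa using (hsq.div_const (((j:ℝ)+1)^2)).const_sub 1
    have hl := hu.log (hfac_ne t ht' j)
    refine hl.congr_deriv ?_
    symm
    rw [hv]
    rw [eq_div_iff (hfac_ne t ht' j)]
    field_simp
    ring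
  -- pointwise limit of G n
  have hsinne : ∀ t : ℝ, (∀ m : ℤ, t ≠ (m:ℝ)) → Real.sin (π*t) ≠ 0 := by
    intro t ht h
    rw [Real.sin_eq_zero_iff] at h
    obtain ⟨n, hn⟩ := h
    have h2 : π * (n:ℝ) = π * t := by linarith [hn]
    exact ht n (mul_left_cancel₀ Real.pi_ne_zero h2).symm
  have hGlim : ∀ t ∈ Metric.ball x δ,
      Tendsto (fun n => G n t) atTop (𝓝 (Real.log (Real.sin (π*t)))) := by
    intro t ht
    have ht' : t ∈ Metric.closedBall x δ := Metric.ball_subset_closedBall ht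
    obtain ⟨ht0, htj⟩ := hne t ht'
    have hfprod := Real.tendsto_euler_sin_prod t
    have hlog := hfprod.log (hsinne t (hball t ht'))
    apply hlog.congr
    intro n
    have hprodne : (∏ j ∈ range n, (1 - t^2/((j:ℝ)+1)^2)) ≠ 0 :=
      Finset.prod_ne_zero_iff.2 fun j _ => hfac_ne t ht' j
    rw [Real.log_mul (mul_ne_zero Real.pi_ne_zero ht0) hprodne,
      Real.log_mul Real.pi_ne_zero ht0,
      Real.log_prod (fun j _ => hfac_ne t ht' j)]
  -- uniform limit of derivatives
  have hconst : TendstoUniformlyOn (fun (_:ℕ) (t:ℝ) => 1/t) (fun t => 1/t) atTop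
      (Metric.ball x δ) := by
    intro u hu
    filter_upwards with n t ht
    exact refl_mem_uniformity hu
  have hDunif : TendstoUniformlyOn (fun (n:ℕ) t => 1/t + ∑ j ∈ range n, v j t) D atTop
      (Metric.ball x δ) := hconst.add (hunif.mono Metric.ball_subset_closedBall)
  have hxball : x ∈ Metric.ball x δ := Metric.mem_ball_self hδ
  have key : HasDerivAt (fun t => Real.log (Real.sin (π*t))) (D x) x :=
    hasDerivAt_of_tendstoUniformlyOn Metric.isOpen_ball hDunif
      (Eventually.of_forall fun n t ht => hGderiv n t ht) hGlim hxball
  have hstd : HasDerivAt (fun t => Real.log (Real.sin (π*t)))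
      (π * Real.cos (π*x) / Real.sin (π*x)) x := by
    have h1 : HasDerivAt (fun t : ℝ => π*t) π x := by
      simpa using (hasDerivAt_id x).const_mul π
    have h2 := h1.sin
    have h3 := h2.log (hsinne x hx)
    convert h3 using 1
    ring
  have hDx : D x = π * Real.cos (π*x) / Real.sin (π*x) := key.unique hstd
  have hfinal := hDunif.tendsto_at hxball
  rw [hDx] at hfinal
  apply hfinal.congr
  intro n
  rw [sum_Icc_eq (fun m : ℤ => 1/(x+(m:ℝ))) n]
  congr 1
  · norm_num
  · apply Finset.sum_congr rfl
    intro j _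
    rw [hv]
    push_cast
    ring_nf

lemma sin_pi_ne (t : ℝ) (ht : ∀ m : ℤ, t ≠ (m:ℝ)) : Real.sin (π*t) ≠ 0 := by
  intro h
  rw [Real.sin_eq_zero_iff] at h
  obtain ⟨n, hn⟩ := h
  have h2 : π * (n:ℝ) = π * t := by linarith [hn]
  exact ht n (mul_left_cancel₀ Real.pi_ne_zero h2).symm

lemma csc_limit (x : ℝ) (hx : ∀ m : ℤ, x ≠ m) :
    Tendsto (fun N : ℕ => ∑ m ∈ Icc (-(N:ℤ)) N, (-1:ℝ)^m/(x+m)) atTop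
      (𝓝 (π / Real.sin (π*x))) := by
  have hx2 : ∀ m : ℤ, x/2 ≠ (m:ℝ) := by
    intro m h
    exact hx (2*m) (by push_cast; linarith)
  have hhalf := cot_limit (x/2) hx2
  have hfull := cot_limit x hx
  have hdiv : Tendsto (fun N : ℕ => N/2) atTop atTop :=
    tendsto_atTop_atTop_of_monotone (fun a b h => Nat.div_le_div_right h)
      (fun b => ⟨2*b, by omega⟩)
  have hhalf' := hhalf.comp hdiv
  -- finset identity
  have hid : ∀ N : ℕ, ∑ m ∈ Icc (-(N:ℤ)) N, (-1:ℝ)^m/(x+m)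
      = (∑ j ∈ Icc (-((N/2:ℕ)):ℤ) ((N/2:ℕ)), 1/(x/2+j))
        - ∑ m ∈ Icc (-(N:ℤ)) N, 1/(x+m) := by
    intro N
    rw [eq_sub_iff_add_eq, ← Finset.sum_add_distrib]
    have step1 : ∑ m ∈ Icc (-(N:ℤ)) N, ((-1:ℝ)^m/(x+m) + 1/(x+m))
        = ∑ m ∈ (Icc (-(N:ℤ)) N).filter (fun m => Even m), 2/(x+(m:ℝ)) := by
      rw [← Finset.sum_filter_add_sum_filter_not (Icc (-(N:ℤ)) N) (fun m => Even m)]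
      have hz : ∑ m ∈ (Icc (-(N:ℤ)) N).filter (fun m => ¬ Even m),
          ((-1:ℝ)^m/(x+m) + 1/(x+m)) = 0 := by
        apply Finset.sum_eq_zero
        intro m hm
        rw [Finset.mem_filter] at hm
        rw [(Int.not_even_iff_odd.1 hm.2).neg_one_zpow]
        ring
      rw [hz, add_zero]
      apply Finset.sum_congr rfl
      intro m hm
      rw [Finset.mem_filter] at hm
      rw [hm.2.neg_one_zpow]
      ring
    rw [step1]
    apply Finset.sum_nbij' (i := fun m => m/2) (j := fun j => 2*j)
    · intro m hm
      simp only [Finset.mem_filter, Finset.mem_Icc, Int.even_iff] at hm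
      simp only [Finset.mem_Icc]
      omega
    · intro j hj
      simp only [Finset.mem_Icc] at hj
      simp only [Finset.mem_filter, Finset.mem_Icc, Int.even_iff]
      omega
    · intro m hm
      simp only [Finset.mem_filter, Finset.mem_Icc, Int.even_iff] at hm
      omega
    · intro j hj
      omega
    · intro m hm
      simp only [Finset.mem_filter, Finset.mem_Icc, Int.even_iff] at hm
      obtain ⟨c, hc⟩ : ∃ c, m = 2*c := ⟨m/2, by omega⟩
      subst hc
      have hy : x/2 + ((2*c/2 : ℤ):ℝ) ≠ 0 := by
        rw [show (2*c/2 : ℤ) = c by omega]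
        exact add_int_ne_zero hx2 c
      rw [show (2*c/2 : ℤ) = c by omega] at hy ⊢
      have hy2 : x + ((2*c:ℤ):ℝ) ≠ 0 := add_int_ne_zero hx (2*c)
      rw [div_eq_div_iff hy2 hy]
      push_cast
      ring
  -- limits
  have hcomb := hhalf'.sub hfull
  have hVal : π * Real.cos (π*(x/2)) / Real.sin (π*(x/2)) - π * Real.cos (π*x) / Real.sin (π*x)
      = π / Real.sin (π*x) := by
    have hs : Real.sin (π*(x/2)) ≠ 0 := sin_pi_ne (x/2) hx2
    have hc : Real.cos (π*(x/2)) ≠ 0 := by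
      intro h
      rw [Real.cos_eq_zero_iff] at h
      obtain ⟨n, hn⟩ := h
      have : x = 2*n + 1 := by
        have hpi := Real.pi_ne_zero
        have : π * x = π * (2*n+1) := by push_cast at hn ⊢; linarith [hn]
        have := mul_left_cancel₀ hpi this
        linarith
      exact hx (2*n+1) (by push_cast; linarith)
    have key : ∀ s c : ℝ, s ≠ 0 → c ≠ 0 →
        π*c/s - π*(2*c^2-1)/(2*s*c) = π/(2*s*c) := by
      intro s c hs hc
      field_simp
      ring
    rw [show π * x = 2*(π*(x/2)) by ring, Real.sin_two_mul, Real.cos_two_mul]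
    exact key _ _ hs hc
  rw [hVal] at hcomb
  apply hcomb.congr
  intro N
  exact (hid N).symm

theorem iteratedDeriv_csc_sum (x : ℝ) (hx : ∀ m : ℤ, x ≠ m) (k : ℕ) :
    Tendsto (fun N : ℕ =>
        (-1 : ℝ) ^ k * (k.factorial : ℝ) *
          ∑ n ∈ Finset.Icc (-(N : ℤ)) (N : ℤ), (-1 : ℝ) ^ n / (x + n) ^ (k + 1))
      atTop (nhds (iteratedDeriv k (fun t : ℝ => π / Real.sin (π * t)) x)) := by
  induction k generalizing x hx with
  | zero =>
    simpa [iteratedDeriv_zero] using csc_limit x hx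
  | succ k ih =>
    obtain ⟨δ, hδ, hball⟩ := exists_delta x hx
    have hxball : x ∈ Metric.ball x δ := Metric.mem_ball_self hδ
    set g' : ℝ → ℝ := fun t =>
      (-1:ℝ)^(k+1) * ((k+1).factorial : ℝ) * ∑' m : ℤ, (-1:ℝ)^m/(t+m)^(k+2) with hg'
    have hU := unif_sum x δ hδ (k+2) (by omega)
    have huf : TendstoUniformlyOn
        (fun (N:ℕ) t => (-1:ℝ)^(k+1) * ((k+1).factorial : ℝ) *
          ∑ m ∈ Icc (-(N:ℤ)) N, (-1:ℝ)^m/(t+m)^(k+2)) g' atTop (Metric.ball x δ) := by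
      have h2 := (uniformContinuous_const_smul
        ((-1:ℝ)^(k+1) * ((k+1).factorial : ℝ))).comp_tendstoUniformlyOn
        (hU.mono Metric.ball_subset_closedBall)
      simpa [smul_eq_mul, Function.comp_def] using h2
    have hf : ∀ (N:ℕ), ∀ t ∈ Metric.ball x δ,
        HasDerivAt (fun t => (-1:ℝ)^k * (k.factorial : ℝ) *
            ∑ m ∈ Icc (-(N:ℤ)) N, (-1:ℝ)^m/(t+m)^(k+1))
          ((-1:ℝ)^(k+1) * ((k+1).factorial : ℝ) *
            ∑ m ∈ Icc (-(N:ℤ)) N, (-1:ℝ)^m/(t+m)^(k+2)) t := by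
      intro N t ht
      have htne : ∀ m : ℤ, t ≠ (m:ℝ) := hball t (Metric.ball_subset_closedBall ht)
      have h1 := (hasDerivAt_S N k htne).const_mul ((-1:ℝ)^k * (k.factorial : ℝ))
      refine h1.congr_deriv ?_
      rw [Nat.factorial_succ]
      push_cast
      ring
    have hfg : ∀ t ∈ Metric.ball x δ,
        Tendsto (fun N : ℕ => (-1:ℝ)^k * (k.factorial : ℝ) *
            ∑ m ∈ Icc (-(N:ℤ)) N, (-1:ℝ)^m/(t+m)^(k+1)) atTop
          (𝓝 (iteratedDeriv k (fun t : ℝ => π / Real.sin (π * t)) t)) :=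
      fun t ht => ih t (hball t (Metric.ball_subset_closedBall ht))
    have key := hasDerivAt_of_tendstoLocallyUniformlyOn Metric.isOpen_ball
      huf.tendstoLocallyUniformlyOn (Eventually.of_forall hf) hfg hxball
    have hiter : iteratedDeriv (k+1) (fun t : ℝ => π / Real.sin (π * t)) x = g' x := by
      rw [iteratedDeriv_succ]
      exact key.deriv
    rw [hiter]
    exact huf.tendsto_at hxball
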